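/- Let G be a strongly connected directed graph with DFS tree T rooted at s, loop nesting tree H (with respect to T), and dominator tree D rooted at s. Let x ≠ s be a vertex and w a vertex such that the parent h(w) of w in H is not a proper descendant of x in D (h(w) ∉ D[x]∖{x}) while w ∈ D[x]∖{x}. Then the nearest common ancestor of w and x in H equals h(w). -/

import Mathlib

/-- A (directed) walk in digraph `G` from `a` to `b`, given as its list of vertices. -/
def DiWalk {V : Type*} (G : V → V → Prop) (a b : V) (l : List V) : Prop :=
  List.Chain' G l ∧ l.head? = some a ∧ l.getLast? = some b

/-- Ancestor relation of the rooted tree given by the parent function `par`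
with root `s`: `Anc par s a b` iff `a` is a (weak) ancestor of `b`. -/
def Anc {V : Type*} (par : V → V) (s : V) : V → V → Prop :=
  Relation.ReflTransGen (fun a b => b ≠ s ∧ par b = a)

/-- `loop(u)` with respect to the DFS tree `par` of `G`: descendants `x` of `u` in the
tree having a directed walk to `u` in `G` using only descendants of `u`. -/
def Loop {V : Type*} (G : V → V → Prop) (par : V → V) (s u : V) : Set V :=
  {x | Anc par s u x ∧ ∃ l, DiWalk G x u l ∧ ∀ y ∈ l, Anc par s u y}

/-- The ancestor relation of the loop nesting tree `H`: `a` is an `H`-ancestor of `b`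
iff `a` is a `T`-ancestor of `b` and `b ∈ loop(a)`. -/
def AncH {V : Type*} (G : V → V → Prop) (par : V → V) (s a b : V) : Prop :=
  Anc par s a b ∧ b ∈ Loop G par s a

/-- `a` dominates `b` with respect to source `s`: every `s → b` walk contains `a`. -/
def Dom {V : Type*} (G : V → V → Prop) (s a b : V) : Prop :=
  ∀ l, DiWalk G s b l → a ∈ l

lemma Anc.trans' {V : Type*} {par : V → V} {s a b c : V}
    (h1 : Anc par s a b) (h2 : Anc par s b c) : Anc par s a c :=
  Relation.ReflTransGen.trans h1 h2

lemma loop_self {V : Type*} (G : V → V → Prop) (par : V → V) (s u : V) :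
    u ∈ Loop G par s u := by
  refine ⟨Relation.ReflTransGen.refl, [u], ⟨List.isChain_singleton u, rfl, rfl⟩, ?_⟩
  intro y hy
  simp only [List.mem_singleton] at hy
  subst hy
  exact Relation.ReflTransGen.refl

lemma anc_walk {V : Type*} (G : V → V → Prop) (par : V → V) (s : V)
    (htree_edge : ∀ a, a ≠ s → G (par a) a) {a b : V} (h : Anc par s a b) :
    ∃ l, DiWalk G a b l ∧ ∀ y ∈ l, Anc par s a y ∧ Anc par s y b := by
  induction h with
  | refl =>
    refine ⟨[a], ⟨List.isChain_singleton a, rfl, rfl⟩, ?_⟩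
    intro y hy
    simp only [List.mem_singleton] at hy
    subst hy
    exact ⟨Relation.ReflTransGen.refl, Relation.ReflTransGen.refl⟩
  | @tail c d h1 h2 ih =>
    obtain ⟨l, ⟨hc, hh, hl⟩, hmem⟩ := ih
    have hlne : l ≠ [] := by rintro rfl; simp at hh
    refine ⟨l ++ [d], ⟨?_, ?_, ?_⟩, ?_⟩
    · refine List.IsChain.append hc (List.isChain_singleton d) ?_
      intro z hz y hy
      simp only [List.head?_cons, Option.mem_some_iff] at hy
      rw [hl, Option.mem_some_iff] at hz
      subst hz; subst hy
      have := htree_edge d h2.1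
      rwa [h2.2] at this
    · rw [List.head?_append_of_ne_nil _ hlne]; exact hh
    · simp
    · intro y hy
      rcases List.mem_append.mp hy with h | h
      · obtain ⟨h1', h2'⟩ := hmem y h
        exact ⟨h1', h2'.tail h2⟩
      · simp only [List.mem_singleton] at h
        subst h
        exact ⟨h1.tail h2, Relation.ReflTransGen.refl⟩

lemma diwalk_append {V : Type*} {G : V → V → Prop} {a b c : V} {l m : List V}
    (h1 : DiWalk G a b l) (h2 : DiWalk G b c m) : DiWalk G a c (l ++ m.tail) := by
  obtain ⟨hc1, hh1, hl1⟩ := h1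
  obtain ⟨hc2, hh2, hl2⟩ := h2
  obtain ⟨m', rfl⟩ : ∃ m', m = b :: m' := by
    cases m with
    | nil => simp at hh2
    | cons z t =>
      simp only [List.head?_cons, Option.some_inj] at hh2
      subst hh2; exact ⟨t, rfl⟩
  have hlne : l ≠ [] := by rintro rfl; simp at hh1
  simp only [List.tail_cons]
  replace hc2 := List.isChain_cons.mp hc2
  refine ⟨?_, ?_, ?_⟩
  · refine List.IsChain.append hc1 hc2.2 ?_
    intro z hz y hy
    rw [hl1, Option.mem_some_iff] at hz
    subst hz
    exact hc2.1 y hy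
  · rw [List.head?_append_of_ne_nil _ hlne]; exact hh1
  · cases m' with
    | nil =>
      simp only [List.getLast?_singleton, Option.some_inj] at hl2
      subst hl2; simpa using hl1
    | cons z t =>
      rw [List.getLast?_append_of_ne_nil _ (by simp)]
      simpa using hl2

/-- in a strongly connected `G` with DFS tree `par` rooted at `s`,
loop nesting tree `H` and dominator tree `D` rooted at `s`, if `x ≠ s`, `w` is a
proper descendant of `x` in `D` (`w ∈ D[x]∖{x}`), and the parent `hw = h(w)` of `w`
in `H` is not a proper descendant of `x` in `D`, then the nearest common ancestor of
`w` and `x` in `H` equals `h(w)`. -/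
theorem stmt_19 {V : Type*} (G : V → V → Prop) (par : V → V) (s x w hw : V)
    (hsc : ∀ a b : V, Relation.ReflTransGen G a b)
    (hroot : par s = s)
    (htree_edge : ∀ a, a ≠ s → G (par a) a)
    (hanti : ∀ a b, Anc par s a b → Anc par s b a → a = b)
    (hxs : x ≠ s)
    (hhw1 : hw ≠ w) (hhw2 : Anc par s hw w) (hhw3 : w ∈ Loop G par s hw)
    (hhw4 : ∀ y, y ≠ w → Anc par s y w → w ∈ Loop G par s y → Anc par s y hw)
    (hwD : Dom G s x w) (hwx : w ≠ x)
    (hhwD : ¬ (Dom G s x hw ∧ hw ≠ x)) :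
    AncH G par s hw w ∧ AncH G par s hw x ∧
      ∀ y, AncH G par s y w → AncH G par s y x → AncH G par s y hw := by
  by_cases hcase : hw = x
  · subst hcase
    exact ⟨⟨hhw2, hhw3⟩, ⟨Relation.ReflTransGen.refl, loop_self G par s hw⟩,
      fun y _ h2 => h2⟩
  · have hnd : ¬ Dom G s x hw := fun h => hhwD ⟨h, hcase⟩
    simp only [Dom, not_forall] at hnd
    obtain ⟨q, hq, hxq⟩ := hnd
    obtain ⟨p, hp, hpm⟩ := anc_walk G par s htree_edge hhw2
    have hxp : x ∈ p := by
      have hmem := hwD (q ++ p.tail) (diwalk_append hq hp)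
      rcases List.mem_append.mp hmem with h | h
      · exact absurd h hxq
      · exact List.mem_of_mem_tail h
    obtain ⟨hhwx, hxw⟩ := hpm x hxp
    obtain ⟨p2, hp2, hp2m⟩ := anc_walk G par s htree_edge hxw
    obtain ⟨lw, hlw, hlwm⟩ := hhw3.2
    have hxLoop : x ∈ Loop G par s hw := by
      refine ⟨hhwx, p2 ++ lw.tail, diwalk_append hp2 hlw, ?_⟩
      intro y hy
      rcases List.mem_append.mp hy with h | h
      · exact hhwx.trans' (hp2m y h).1
      · exact hlwm y (List.mem_of_mem_tail h)
    refine ⟨⟨hhw2, hhw3⟩, ⟨hhwx, hxLoop⟩, ?_⟩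
    rintro y ⟨hyw, hywL⟩ ⟨hyx, hyxL⟩
    have hyne : y ≠ w := fun h => hwx (hanti x w hxw (h ▸ hyxL.1)).symm
    have hyhw : Anc par s y hw := hhw4 y hyne hyw hywL
    obtain ⟨ly, hly, hlym⟩ := hywL.2
    refine ⟨hyhw, hyhw, p ++ ly.tail, diwalk_append hp hly, ?_⟩
    intro z hz
    rcases List.mem_append.mp hz with h | h
    · exact hyhw.trans' (hpm z h).1
    · exact hlym z (List.mem_of_mem_tail h)
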